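/- Let {πᵢ : Xᵢ → Yᵢ}ᵢ∈I be a family of continuous surjections between compact Hausdorff spaces and π = ∏πᵢ : ∏Xᵢ → ∏Yᵢ the product map. A convergent sequence (yₙ) in ∏Yᵢ with limit y is π-fiber convergent if and only if for each i ∈ I the coordinate sequence (yₙ(i)) is πᵢ-fiber convergent to y(i). -/

import Mathlib

open Filter Topology

/-- `π`-fiber convergence: a sequence `(yₙ)` converging to `y` in `Y` is `π`-fiber
convergent (for `π : X → Y`) if every point of the fiber `π⁻¹(y)` is the limit of a
sequence of points of the fibers `π⁻¹(yₙ)`. -/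
def IsPiFiberConvergent {X Y : Type*} [TopologicalSpace X] [TopologicalSpace Y]
    (π : X → Y) (y : ℕ → Y) (y₀ : Y) : Prop :=
  ∀ x₀ : X, π x₀ = y₀ →
    ∃ x : ℕ → X, (∀ n, π (x n) = y n) ∧ Tendsto x atTop (𝓝 x₀)

/-- for a family `πᵢ : Xᵢ → Yᵢ` of continuous surjections between compact
Hausdorff spaces and the product map `π = ∏ πᵢ`, a convergent sequence `(yₙ) → y` in
`∏ Yᵢ` is `π`-fiber convergent iff each coordinate sequence `(yₙ(i)) → y(i)` is
`πᵢ`-fiber convergent. -/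
theorem piFiberConvergent_pi_iff
    {I : Type*} (X Y : I → Type*)
    [∀ i, TopologicalSpace (X i)] [∀ i, CompactSpace (X i)] [∀ i, T2Space (X i)]
    [∀ i, TopologicalSpace (Y i)] [∀ i, CompactSpace (Y i)] [∀ i, T2Space (Y i)]
    (π : ∀ i, X i → Y i) (hc : ∀ i, Continuous (π i)) (hs : ∀ i, Function.Surjective (π i))
    (y : ℕ → ∀ i, Y i) (y₀ : ∀ i, Y i) (hconv : Tendsto y atTop (𝓝 y₀)) :
    IsPiFiberConvergent (fun x : ∀ i, X i => fun i => π i (x i)) y y₀ ↔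
      ∀ i, IsPiFiberConvergent (π i) (fun n => y n i) (y₀ i) := by
  classical
  constructor
  · intro h i x₀ hx₀
    -- extend x₀ to a full point of the fiber over y₀
    choose g hg using fun j => hs j (y₀ j)
    set X₀ : ∀ j, X j := Function.update g i x₀ with hX₀
    have hfib : (fun j => π j (X₀ j)) = y₀ := by
      funext j
      by_cases hji : j = i
      · subst hji; simp [hX₀, hx₀]
      · simp [hX₀, Function.update_of_ne hji, hg]
    obtain ⟨x, hx, hxt⟩ := h X₀ hfib
    refine ⟨fun n => x n i, fun n => congrFun (hx n) i, ?_⟩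
    have := ((continuous_apply i).tendsto X₀).comp hxt
    simpa [hX₀, Function.comp_def] using this
  · intro h x₀ hx₀
    choose x hx hxt using fun i => h i (x₀ i) (congrFun hx₀ i)
    refine ⟨fun n i => x i n, fun n => funext fun i => hx i n, ?_⟩
    rw [tendsto_pi_nhds]
    exact fun i => hxt i
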